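/- arXiv:0911.4460 — 7 statements merged into one kernel-verified Lean document; each statement's English description precedes it below -/
import Mathlib

section
/- Let A be a densely defined closed symmetric operator on a complex separable Hilbert space H. Then dom(A*) decomposes as the direct sum dom(A*) = dom(A) ⊕ ker(A* − i) ⊕ ker(A* + i), where the three summands are mutually orthogonal with respect to the graph inner product ⟨x,y⟩_G := ⟨x,y⟩ + ⟨A*x, A*y⟩ on dom(A*); in particular every x ∈ dom(A*) can be written uniquely as x = x₀ + x₊ + x₋ with x₀ ∈ dom(A), A*x₊ = i x₊ and A*x₋ = −i x₋. -/
open scoped ComplexInnerProductSpace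

noncomputable section

variable {H : Type*} [NormedAddCommGroup H] [InnerProductSpace ℂ H] [CompleteSpace H]

/-- The graph inner product `⟪x, y⟫_G := ⟪x, y⟫ + ⟪A† x, A† y⟫` on `dom A†`. -/
def graphInner (A : H →ₗ.[ℂ] H) (x y : A.adjoint.domain) : ℂ :=
  ⟪(x : H), (y : H)⟫ + ⟪A.adjoint x, A.adjoint y⟫

section Aux

variable (A : H →ₗ.[ℂ] H)
    (hdense : Dense (A.domain : Set H))
    (hsym : ∀ x y : A.domain, ⟪A x, (y : H)⟫ = ⟪(x : H), A y⟫)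

include hdense hsym in
lemma A_le_adj : A ≤ A.adjoint :=
  LinearPMap.IsFormalAdjoint.le_adjoint hdense (fun x y => hsym x y)

include hdense hsym in
lemma adj_apply_of_mem (x : A.adjoint.domain) (hx : (x : H) ∈ A.domain) :
    A.adjoint x = A ⟨(x : H), hx⟩ :=
  ((A_le_adj A hdense hsym).2 (x := ⟨(x:H), hx⟩) (y := x) rfl).symm

include hdense hsym in
lemma orth_dom_eigen (c : ℂ) (hc : c * c = -1) (x y : A.adjoint.domain)
    (hx : (x : H) ∈ A.domain) (hy : A.adjoint y = c • (y : H)) :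
    graphInner A x y = 0 := by
  have h1 : ⟪A.adjoint x, (y : H)⟫ = c • ⟪(x : H), (y : H)⟫ := by
    rw [adj_apply_of_mem A hdense hsym x hx]
    have h2 : ⟪A.adjoint y, (⟨(x:H), hx⟩ : A.domain)⟫ = ⟪(y : H), A ⟨(x:H), hx⟩⟫ :=
      LinearPMap.adjoint_isFormalAdjoint hdense y ⟨(x:H), hx⟩
    have := congrArg (starRingEnd ℂ) h2
    simp only [inner_conj_symm] at this
    rw [← this, hy, inner_smul_right, smul_eq_mul]
  rw [graphInner, hy, inner_smul_right, h1]
  rw [smul_eq_mul]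
  have : c * (c * (⟪(x:H),(y:H)⟫)) = -⟪(x:H),(y:H)⟫ := by rw [← mul_assoc, hc]; ring
  rw [this]; ring

lemma orth_eigen_eigen (x y : A.adjoint.domain)
    (hx : A.adjoint x = (Complex.I : ℂ) • (x : H))
    (hy : A.adjoint y = (-Complex.I : ℂ) • (y : H)) :
    graphInner A x y = 0 := by
  rw [graphInner, hx, hy, inner_smul_left, inner_smul_right]
  simp [Complex.conj_I, Complex.I_mul_I]
  ring_nf
  rw [Complex.I_sq]
  ring

end Aux

section Aux2

variable (A : H →ₗ.[ℂ] H)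

lemma graphInner_add_left (u v w : A.adjoint.domain) :
    graphInner A (u + v) w = graphInner A u w + graphInner A v w := by
  simp only [graphInner, Submodule.coe_add, LinearPMap.map_add, inner_add_left]
  ring

lemma graphInner_conj_symm (u v : A.adjoint.domain) :
    graphInner A u v = (starRingEnd ℂ) (graphInner A v u) := by
  simp only [graphInner, map_add, inner_conj_symm]

lemma graphInner_zero_left (v : A.adjoint.domain) : graphInner A 0 v = 0 := by
  simp only [graphInner, ZeroMemClass.coe_zero, LinearPMap.map_zero, inner_zero_left, add_zero]

lemma graphInner_self_eq_zero (v : A.adjoint.domain) (h : graphInner A v v = 0) : v = 0 := by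
  have h1 : (⟪(v:H),(v:H)⟫ : ℂ).re + (⟪A.adjoint v, A.adjoint v⟫ : ℂ).re = 0 := by
    rw [graphInner] at h
    simpa using congrArg Complex.re h
  have h2 : (0:ℝ) ≤ (⟪(v:H),(v:H)⟫ : ℂ).re := inner_self_nonneg (𝕜 := ℂ) (x := _)
  have h3 : (0:ℝ) ≤ (⟪A.adjoint v, A.adjoint v⟫ : ℂ).re := inner_self_nonneg (𝕜 := ℂ) (x := _)
  have h4 : (⟪(v:H),(v:H)⟫ : ℂ).re = 0 := by linarith
  have h5 : (v : H) = 0 := by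
    have h6 : (⟪(v:H),(v:H)⟫ : ℂ) = 0 := by
      have him := inner_self_im (𝕜 := ℂ) (x := (v:H))
      exact Complex.ext h4 him
    rwa [inner_self_eq_zero] at h6
  exact Subtype.ext h5

end Aux2

section Aux3

variable (A : H →ₗ.[ℂ] H)
    (hdense : Dense (A.domain : Set H))
    (hsym : ∀ x y : A.domain, ⟪A x, (y : H)⟫ = ⟪(x : H), A y⟫)

include hdense hsym in
lemma key_zero (a b c : A.adjoint.domain) (ha : (a : H) ∈ A.domain)
    (hb : A.adjoint b = (Complex.I : ℂ) • (b : H))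
    (hc : A.adjoint c = (-Complex.I : ℂ) • (c : H))
    (h : a + b + c = 0) : a = 0 ∧ b = 0 ∧ c = 0 := by
  have hIc : (Complex.I : ℂ) * Complex.I = -1 := Complex.I_mul_I
  have hIc' : (-Complex.I : ℂ) * -Complex.I = -1 := by
    rw [neg_mul_neg, Complex.I_mul_I]
  have hexp : ∀ v : A.adjoint.domain,
      graphInner A a v + graphInner A b v + graphInner A c v = 0 := by
    intro v
    rw [← graphInner_add_left, ← graphInner_add_left, h, graphInner_zero_left]
  have hb0 : b = 0 := by
    apply graphInner_self_eq_zero A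
    have h1 : graphInner A a b = 0 := orth_dom_eigen A hdense hsym Complex.I hIc a b ha hb
    have h2 : graphInner A c b = 0 := by
      rw [graphInner_conj_symm, orth_eigen_eigen A b c hb hc, map_zero]
    have := hexp b
    rw [h1, h2] at this
    linear_combination this
  have hc0 : c = 0 := by
    apply graphInner_self_eq_zero A
    have h1 : graphInner A a c = 0 := orth_dom_eigen A hdense hsym (-Complex.I) hIc' a c ha hc
    have h2 : graphInner A b c = 0 := orth_eigen_eigen A b c hb hc
    have := hexp c
    rw [h1, h2] at this
    linear_combination this
  have ha0 : a = 0 := by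
    rw [hb0, hc0] at h
    simpa using h
  exact ⟨ha0, hb0, hc0⟩

end Aux3

section Main

variable (A : H →ₗ.[ℂ] H)

theorem vonNeumann_decomposition'
    (hdense : Dense (A.domain : Set H))
    (hclosed : IsClosed (A.graph : Set (H × H)))
    (hsym : ∀ x y : A.domain, ⟪A x, (y : H)⟫ = ⟪(x : H), A y⟫)
    (x : A.adjoint.domain) :
    ∃ p : A.adjoint.domain × A.adjoint.domain × A.adjoint.domain,
        x = p.1 + p.2.1 + p.2.2 ∧ ((p.1 : H) ∈ A.domain) ∧
        (A.adjoint p.2.1 = (Complex.I : ℂ) • (p.2.1 : H)) ∧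
        (A.adjoint p.2.2 = (-Complex.I : ℂ) • (p.2.2 : H)) := by
  classical
  set e := WithLp.linearEquiv 2 ℂ (H × H) with he
  set D : Submodule ℂ (WithLp 2 (H × H)) := A.graph.comap (e : WithLp 2 (H × H) →ₗ[ℂ] H × H)
    with hD
  have hDclosed : IsClosed (D : Set (WithLp 2 (H × H))) := by
    have : (D : Set (WithLp 2 (H × H))) =
        (WithLp.prodContinuousLinearEquiv 2 ℂ H H) ⁻¹' (A.graph : Set (H × H)) := rfl
    rw [this]
    exact hclosed.preimage (WithLp.prodContinuousLinearEquiv 2 ℂ H H).continuous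
  haveI : CompleteSpace D := hDclosed.completeSpace_coe
  set gx : WithLp 2 (H × H) := e.symm ((x : H), A.adjoint x) with hgx
  set d : D := D.orthogonalProjectionOnto gx with hdd
  have hdmem : (d : WithLp 2 (H × H)) ∈ D := d.2
  have hk : gx - (d : WithLp 2 (H × H)) ∈ Dᗮ := D.sub_starProjection_mem_orthogonal gx
  -- extract the element of the domain of A
  have hdmem2 : (e (d : WithLp 2 (H × H))) ∈ A.graph := hdmem
  rw [LinearPMap.mem_graph_iff] at hdmem2
  obtain ⟨z, hz1, hz2⟩ := hdmem2
  have hle := A_le_adj A hdense hsym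
  set x₀W : A.adjoint.domain := ⟨(z : H), hle.1 z.2⟩ with hx₀W
  have hAx₀W : A.adjoint x₀W = A z := (hle.2 (x := z) (y := x₀W) rfl).symm
  set y : A.adjoint.domain := x - x₀W with hy
  -- components of gx - d
  have hfst : (gx - (d : WithLp 2 (H × H))).fst = (y : H) := by
    rw [WithLp.sub_fst]
    have h1 : gx.fst = (x : H) := rfl
    have h2 : (d : WithLp 2 (H × H)).fst = (z : H) := by
      exact hz1.symm
    rw [h1, h2, hy]; rfl
  have hsnd : (gx - (d : WithLp 2 (H × H))).snd = A.adjoint y := by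
    rw [WithLp.sub_snd]
    have h1 : gx.snd = A.adjoint x := rfl
    have h2 : (d : WithLp 2 (H × H)).snd = A z := by
      exact hz2.symm
    rw [h1, h2, hy, LinearPMap.map_sub, hAx₀W]
  -- the orthogonality relation
  have hperp : ∀ v : A.domain, ⟪(v : H), (y : H)⟫ + ⟪A v, A.adjoint y⟫ = 0 := by
    intro v
    have hu : e.symm ((v : H), A v) ∈ D := by
      show e (e.symm ((v : H), A v)) ∈ A.graph
      rw [LinearEquiv.apply_symm_apply]
      exact LinearPMap.mem_graph A v
    have := (Submodule.mem_orthogonal D _).1 hk _ hu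
    rw [WithLp.prod_inner_apply] at this
    rw [show (gx - (d : WithLp 2 (H × H))).ofLp.1 = (y : H) from hfst,
      show (gx - (d : WithLp 2 (H × H))).ofLp.2 = A.adjoint y from hsnd] at this
    exact this
  -- A† y is in the domain of A† with A† (A† y) = - y
  have hiprop : ∀ v : A.domain, ⟪-(y : H), (v : H)⟫ = ⟪A.adjoint y, A v⟫ := by
    intro v
    have := congrArg (starRingEnd ℂ) (hperp v)
    simp only [map_add, inner_conj_symm, map_zero] at this
    have h3 : ⟪A.adjoint y, A v⟫ = -⟪(y : H), (v : H)⟫ := by linear_combination this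
    rw [h3, inner_neg_left]
  have hyAmem : A.adjoint y ∈ A.adjoint.domain :=
    LinearPMap.mem_adjoint_domain_of_exists _ ⟨-(y : H), hiprop⟩
  set yA : A.adjoint.domain := ⟨A.adjoint y, hyAmem⟩ with hyAdef
  have hyA : A.adjoint yA = -(y : H) := LinearPMap.adjoint_apply_eq hdense yA hiprop
  -- define the eigenvector parts
  set yp : A.adjoint.domain := ((2 : ℂ)⁻¹) • (y - Complex.I • yA) with hyp
  set ym : A.adjoint.domain := ((2 : ℂ)⁻¹) • (y + Complex.I • yA) with hym
  have hsum : yp + ym = y := by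
    apply Subtype.ext
    push_cast [hyp, hym]
    module
  have hcyA : (yA : H) = A.adjoint y := rfl
  have heigp : A.adjoint yp = (Complex.I : ℂ) • (yp : H) := by
    rw [hyp, LinearPMap.map_smul, LinearPMap.map_sub, LinearPMap.map_smul, hyA, ← hcyA]
    push_cast
    match_scalars <;> (try ring_nf) <;> (try simp [Complex.I_sq]) <;> (try ring) <;> (try norm_num)
  have heigm : A.adjoint ym = (-Complex.I : ℂ) • (ym : H) := by
    rw [hym, LinearPMap.map_smul, LinearPMap.map_add, LinearPMap.map_smul, hyA, ← hcyA]
    push_cast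
    match_scalars <;> (try ring_nf) <;> (try simp [Complex.I_sq]) <;> (try ring) <;> (try norm_num)
  refine ⟨(x₀W, yp, ym), ?_, z.2, heigp, heigm⟩
  have : x₀W + (yp + ym) = x := by rw [hsum, hy]; abel
  rw [← this]; abel

end Main


/-- von Neumann decomposition.  For a densely defined closed symmetric operator `A`
on a complex separable Hilbert space, every `x ∈ dom A†` can be written uniquely as
`x = x₀ + x₊ + x₋` with `x₀ ∈ dom A`, `A† x₊ = i x₊`, `A† x₋ = -i x₋`; moreover the three
summand spaces `dom A`, `ker (A† - i)`, `ker (A† + i)` are mutually orthogonal with respect to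
the graph inner product. -/
theorem vonNeumann_decomposition
    [TopologicalSpace.SeparableSpace H]
    (A : H →ₗ.[ℂ] H)
    (hdense : Dense (A.domain : Set H))
    (hclosed : IsClosed (A.graph : Set (H × H)))
    (hsym : ∀ x y : A.domain, ⟪A x, (y : H)⟫ = ⟪(x : H), A y⟫) :
    (∀ x : A.adjoint.domain,
      ∃! p : A.adjoint.domain × A.adjoint.domain × A.adjoint.domain,
        x = p.1 + p.2.1 + p.2.2 ∧ ((p.1 : H) ∈ A.domain) ∧
        (A.adjoint p.2.1 = (Complex.I : ℂ) • (p.2.1 : H)) ∧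
        (A.adjoint p.2.2 = (-Complex.I : ℂ) • (p.2.2 : H))) ∧
    (∀ x y : A.adjoint.domain, (x : H) ∈ A.domain →
        A.adjoint y = (Complex.I : ℂ) • (y : H) → graphInner A x y = 0) ∧
    (∀ x y : A.adjoint.domain, (x : H) ∈ A.domain →
        A.adjoint y = (-Complex.I : ℂ) • (y : H) → graphInner A x y = 0) ∧
    (∀ x y : A.adjoint.domain, A.adjoint x = (Complex.I : ℂ) • (x : H) →
        A.adjoint y = (-Complex.I : ℂ) • (y : H) → graphInner A x y = 0) := by
  refine ⟨?_, ?_, ?_, fun x y hx hy => orth_eigen_eigen A x y hx hy⟩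
  · intro x
    obtain ⟨p, hp⟩ := vonNeumann_decomposition' A hdense hclosed hsym x
    refine ⟨p, hp, ?_⟩
    rintro q ⟨hq1, hq2, hq3, hq4⟩
    obtain ⟨hp1, hp2, hp3, hp4⟩ := hp
    have hzero : (q.1 - p.1) + (q.2.1 - p.2.1) + (q.2.2 - p.2.2) = 0 := by
      have := hq1.symm.trans hp1
      rw [← sub_eq_zero] at this
      rw [← this]; abel
    have hmem : ((q.1 - p.1 : A.adjoint.domain) : H) ∈ A.domain := by
      rw [Submodule.coe_sub]
      exact sub_mem hq2 hp2
    have heig1 : A.adjoint (q.2.1 - p.2.1) = (Complex.I : ℂ) • ((q.2.1 - p.2.1 : A.adjoint.domain) : H) := by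
      rw [LinearPMap.map_sub, hq3, hp3, Submodule.coe_sub, smul_sub]
    have heig2 : A.adjoint (q.2.2 - p.2.2) = (-Complex.I : ℂ) • ((q.2.2 - p.2.2 : A.adjoint.domain) : H) := by
      rw [LinearPMap.map_sub, hq4, hp4, Submodule.coe_sub, smul_sub]
    obtain ⟨e1, e2, e3⟩ := key_zero A hdense hsym _ _ _ hmem heig1 heig2 hzero
    have q1 : q.1 = p.1 := by rwa [sub_eq_zero] at e1
    have q2 : q.2.1 = p.2.1 := by rwa [sub_eq_zero] at e2
    have q3 : q.2.2 = p.2.2 := by rwa [sub_eq_zero] at e3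
    exact Prod.ext q1 (Prod.ext q2 q3)
  · intro x y hx hy
    exact orth_dom_eigen A hdense hsym Complex.I Complex.I_mul_I x y hx hy
  · intro x y hx hy
    exact orth_dom_eigen A hdense hsym (-Complex.I) (by rw [neg_mul_neg, Complex.I_mul_I]) x y hx hy
end
end

section
/- Let A be a densely defined closed symmetric operator on a complex separable Hilbert space H, and let D be a subspace with dom(A) ⊆ D ⊆ dom(A*) such that the extension A_D := A*|_D is self-adjoint. Then γ(D) = {γ(x) : x ∈ D} is a Lagrangian subspace of the symplectic Hilbert space (β(A), ω̂): the form ω̂ vanishes on γ(D) × γ(D), and γ(D) coincides with its annihilator {v ∈ β(A) : ω̂(v, w) = 0 for all w ∈ γ(D)}. -/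
open scoped ComplexInnerProductSpace

noncomputable section

variable {H : Type*} [NormedAddCommGroup H] [InnerProductSpace ℂ H] [CompleteSpace H]

/-- `dom A` viewed as a submodule of `dom A†` (for symmetric `A` one has `dom A ⊆ dom A†`). -/
def minDom (A : H →ₗ.[ℂ] H) : Submodule ℂ A.adjoint.domain :=
  A.domain.comap A.adjoint.domain.subtype

/-- The abstract boundary space `β(A) := dom A† / dom A`. -/
abbrev beta (A : H →ₗ.[ℂ] H) := A.adjoint.domain ⧸ minDom A

/-- The natural quotient map `γ : dom A† → β(A)`. -/
def gammaMap (A : H →ₗ.[ℂ] H) : A.adjoint.domain →ₗ[ℂ] beta A :=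
  (minDom A).mkQ

/-- The Green form `ω(x,y) := ⟪A† x, y⟫ - ⟪x, A† y⟫` on `dom A†`. -/
def omegaForm (A : H →ₗ.[ℂ] H) (x y : A.adjoint.domain) : ℂ :=
  ⟪A.adjoint x, (y : H)⟫ - ⟪(x : H), A.adjoint y⟫

/-- The induced form `ω̂` on `β(A)`, computed on representatives.  (For a closed symmetric `A`
this is well defined, i.e. independent of the representatives.) -/
def omegaHat (A : H →ₗ.[ℂ] H) (v w : beta A) : ℂ :=
  omegaForm A (Quotient.out v) (Quotient.out w)

/-- The restriction `A_D := A†|_D` of the adjoint to an intermediate subspace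
`dom A ⊆ D ⊆ dom A†`, as a partially defined operator on `H`. -/
def adjRestrict (A : H →ₗ.[ℂ] H) (D : Submodule ℂ A.adjoint.domain) : H →ₗ.[ℂ] H :=
  A.adjoint.domRestrict (D.map A.adjoint.domain.subtype)

namespace LagAux

lemma omegaForm_sub_left (A : H →ₗ.[ℂ] H) (x x' y : A.adjoint.domain) :
    omegaForm A (x - x') y = omegaForm A x y - omegaForm A x' y := by
  simp only [omegaForm, LinearPMap.map_sub, inner_sub_left, Submodule.coe_sub, inner_sub_right]
  ring

lemma omegaForm_sub_right (A : H →ₗ.[ℂ] H) (x y y' : A.adjoint.domain) :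
    omegaForm A x (y - y') = omegaForm A x y - omegaForm A x y' := by
  simp only [omegaForm, LinearPMap.map_sub, inner_sub_left, Submodule.coe_sub, inner_sub_right]
  ring

lemma omegaForm_conj (A : H →ₗ.[ℂ] H) (x y : A.adjoint.domain) :
    omegaForm A x y = -(starRingEnd ℂ) (omegaForm A y x) := by
  simp only [omegaForm, map_sub, inner_conj_symm]
  ring

variable {A : H →ₗ.[ℂ] H}

lemma omega_vanish_left (hdense : Dense (A.domain : Set H))
    (hsym : ∀ x y : A.domain, ⟪A x, (y : H)⟫ = ⟪(x : H), A y⟫)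
    (x y : A.adjoint.domain) (hx : (x : H) ∈ A.domain) : omegaForm A x y = 0 := by
  have hA : A.IsFormalAdjoint A := fun a b => hsym a b
  have hle : A ≤ A.adjoint := hA.le_adjoint hdense
  have h1 : A.adjoint x = A ⟨(x : H), hx⟩ := (hle.2 (x := ⟨(x : H), hx⟩) (y := x) rfl).symm
  have hadj : A.adjoint.IsFormalAdjoint A := LinearPMap.adjoint_isFormalAdjoint hdense
  have h2 : ⟪(x : H), A.adjoint y⟫ = ⟪A ⟨(x : H), hx⟩, (y : H)⟫ := by
    calc ⟪(x : H), A.adjoint y⟫ = (starRingEnd ℂ) ⟪A.adjoint y, (x : H)⟫ :=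
          (inner_conj_symm _ _).symm
      _ = (starRingEnd ℂ) ⟪(y : H), A ⟨(x : H), hx⟩⟫ := by rw [hadj y ⟨(x : H), hx⟩]
      _ = ⟪A ⟨(x : H), hx⟩, (y : H)⟫ := inner_conj_symm _ _
  simp only [omegaForm, h1, h2, sub_self]

lemma omega_vanish_right (hdense : Dense (A.domain : Set H))
    (hsym : ∀ x y : A.domain, ⟪A x, (y : H)⟫ = ⟪(x : H), A y⟫)
    (x y : A.adjoint.domain) (hy : (y : H) ∈ A.domain) : omegaForm A x y = 0 := by
  rw [omegaForm_conj, omega_vanish_left hdense hsym y x hy, map_zero, neg_zero]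

lemma omegaHat_mk (hdense : Dense (A.domain : Set H))
    (hsym : ∀ x y : A.domain, ⟪A x, (y : H)⟫ = ⟪(x : H), A y⟫)
    (x y : A.adjoint.domain) :
    omegaHat A (Submodule.Quotient.mk x) (Submodule.Quotient.mk y) = omegaForm A x y := by
  set x' := Quotient.out (Submodule.Quotient.mk (p := minDom A) x) with hx'
  set y' := Quotient.out (Submodule.Quotient.mk (p := minDom A) y) with hy'
  have hxm : Submodule.Quotient.mk (p := minDom A) x' = Submodule.Quotient.mk x :=
    Quotient.out_eq _
  have hym : Submodule.Quotient.mk (p := minDom A) y' = Submodule.Quotient.mk y :=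
    Quotient.out_eq _
  have hxd : x' - x ∈ minDom A := (Submodule.Quotient.eq _).mp hxm
  have hyd : y' - y ∈ minDom A := (Submodule.Quotient.eq _).mp hym
  have h1 : omegaForm A x' y' - omegaForm A x y' = 0 := by
    rw [← omegaForm_sub_left]
    exact omega_vanish_left hdense hsym _ _ hxd
  have h2 : omegaForm A x y' - omegaForm A x y = 0 := by
    rw [← omegaForm_sub_right]
    exact omega_vanish_right hdense hsym _ _ hyd
  have : omegaHat A (Submodule.Quotient.mk x) (Submodule.Quotient.mk y) = omegaForm A x' y' := rfl
  rw [this, ← sub_eq_zero]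
  calc omegaForm A x' y' - omegaForm A x y
      = (omegaForm A x' y' - omegaForm A x y') + (omegaForm A x y' - omegaForm A x y) := by ring
    _ = 0 := by rw [h1, h2, add_zero]

end LagAux

/-- If `dom A ⊆ D ⊆ dom A†` and the extension `A_D := A†|_D` is self-adjoint,
then `γ(D)` is a Lagrangian subspace of `(β(A), ω̂)`: the form `ω̂` vanishes on `γ(D) × γ(D)`,
and `γ(D)` coincides with its annihilator `{v ∈ β(A) : ω̂(v, w) = 0 ∀ w ∈ γ(D)}`. -/
theorem selfAdjoint_extension_gives_lagrangian
    [TopologicalSpace.SeparableSpace H]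
    (A : H →ₗ.[ℂ] H)
    (hdense : Dense (A.domain : Set H))
    (hclosed : IsClosed (A.graph : Set (H × H)))
    (hsym : ∀ x y : A.domain, ⟪A x, (y : H)⟫ = ⟪(x : H), A y⟫)
    (D : Submodule ℂ A.adjoint.domain)
    (hD : minDom A ≤ D)
    (hsa : IsSelfAdjoint (adjRestrict A D)) :
    (∀ v ∈ D.map (gammaMap A), ∀ w ∈ D.map (gammaMap A), omegaHat A v w = 0) ∧
    {v : beta A | ∀ w ∈ D.map (gammaMap A), omegaHat A v w = 0}
      = (D.map (gammaMap A) : Set (beta A)) := by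
  classical
  set B := adjRestrict A D with hB
  have hsa' : B.adjoint = B := LinearPMap.isSelfAdjoint_def.mp hsa
  have hBdense : Dense (B.domain : Set H) := hsa.dense_domain
  have hBsym : B.IsFormalAdjoint B := by
    have h := LinearPMap.adjoint_isFormalAdjoint (T := B) hBdense
    rwa [hsa'] at h
  -- membership of elements of `D` in the domain of `B`
  have hmemB : ∀ d : A.adjoint.domain, d ∈ D → (d : H) ∈ B.domain := fun d hd =>
    Submodule.mem_inf.mpr ⟨Submodule.mem_map_of_mem hd, d.2⟩
  -- the form vanishes on `D × D`
  have hvan : ∀ d e : A.adjoint.domain, d ∈ D → e ∈ D → omegaForm A d e = 0 := by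
    intro d e hd he
    let u : B.domain := ⟨(d : H), hmemB d hd⟩
    let w : B.domain := ⟨(e : H), hmemB e he⟩
    have hu : B u = A.adjoint d := LinearPMap.domRestrict_apply (y := d) rfl
    have hw : B w = A.adjoint e := LinearPMap.domRestrict_apply (y := e) rfl
    have h := hBsym u w
    rw [hu, hw] at h
    show ⟪A.adjoint d, (e : H)⟫ - ⟪(d : H), A.adjoint e⟫ = 0
    rw [show ((e : H)) = ((w : H)) from rfl, show ((d : H)) = ((u : H)) from rfl, h, sub_self]
  -- the first assertion
  have part1 : ∀ v ∈ D.map (gammaMap A), ∀ w ∈ D.map (gammaMap A), omegaHat A v w = 0 := by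
    rintro _ ⟨d, hd, rfl⟩ _ ⟨e, he, rfl⟩
    have : gammaMap A d = Submodule.Quotient.mk d := rfl
    rw [this, show gammaMap A e = Submodule.Quotient.mk e from rfl,
      LagAux.omegaHat_mk hdense hsym]
    exact hvan d e hd he
  refine ⟨part1, ?_⟩
  ext v
  simp only [Set.mem_setOf_eq, SetLike.mem_coe]
  constructor
  · intro hv
    set x : A.adjoint.domain := Quotient.out v with hxv
    have hmkx : Submodule.Quotient.mk (p := minDom A) x = v := Quotient.out_eq _
    -- `x` is orthogonal (in the Green form) to all of `D`
    have hxd : ∀ d : A.adjoint.domain, d ∈ D → omegaForm A x d = 0 := by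
      intro d hd
      have h1 : omegaHat A v (gammaMap A d) = 0 :=
        hv _ (Submodule.mem_map_of_mem hd)
      rw [show gammaMap A d = Submodule.Quotient.mk d from rfl, ← hmkx,
        LagAux.omegaHat_mk hdense hsym] at h1
      exact h1
    -- hence `x` lies in the domain of `B†`
    have hxB : (x : H) ∈ B.adjoint.domain := by
      apply LinearPMap.mem_adjoint_domain_of_exists
      refine ⟨A.adjoint x, ?_⟩
      intro u
      obtain ⟨hu1, _⟩ := Submodule.mem_inf.mp u.2
      obtain ⟨d, hd, hdu⟩ := hu1
      have hBu : B u = A.adjoint d := LinearPMap.domRestrict_apply (y := d) hdu.symm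
      have h0 := hxd d hd
      have h0' : ⟪A.adjoint x, (d : H)⟫ = ⟪(x : H), A.adjoint d⟫ := by
        rw [← sub_eq_zero]; exact h0
      rw [hBu, ← hdu]
      exact h0'
    rw [hsa'] at hxB
    obtain ⟨hx1, _⟩ := Submodule.mem_inf.mp hxB
    obtain ⟨d, hd, hdx⟩ := hx1
    have : d = x := Subtype.ext hdx
    rw [this] at hd
    exact ⟨x, hd, hmkx⟩
  · rintro ⟨d, hd, rfl⟩
    exact part1 _ (Submodule.mem_map_of_mem hd)
end
end

section
/- Let A be a densely defined closed symmetric operator on a complex separable Hilbert space H, and let L ⊆ β(A) be a Lagrangian subspace, i.e. L equals its ω̂-annihilator {v ∈ β(A) : ω̂(v, w) = 0 for all w ∈ L}. Then D := {x ∈ dom(A*) : γ(x) ∈ L} satisfies dom(A) ⊆ D ⊆ dom(A*) and the extension A_D := A*|_D is self-adjoint. -/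
open scoped ComplexInnerProductSpace

noncomputable section

variable {H : Type*} [NormedAddCommGroup H] [InnerProductSpace ℂ H] [CompleteSpace H]

/-- Symmetry gives `A ≤ A†`. -/
lemma le_adjoint_of_symm (A : H →ₗ.[ℂ] H) (hdense : Dense (A.domain : Set H))
    (hsym : ∀ x y : A.domain, ⟪A x, (y : H)⟫ = ⟪(x : H), A y⟫) :
    A ≤ A.adjoint :=
  LinearPMap.IsFormalAdjoint.le_adjoint hdense (fun x y => hsym x y)

lemma omegaForm_right_zero (A : H →ₗ.[ℂ] H) (hdense : Dense (A.domain : Set H))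
    (hsym : ∀ x y : A.domain, ⟪A x, (y : H)⟫ = ⟪(x : H), A y⟫)
    (x y : A.adjoint.domain) (hy : (y : H) ∈ A.domain) :
    omegaForm A x y = 0 := by
  set y' : A.domain := ⟨(y : H), hy⟩ with hy'
  have h1 : A.adjoint y = A y' :=
    ((le_adjoint_of_symm A hdense hsym).2 (x := y') (y := y) rfl).symm
  have h2 : ⟪A.adjoint x, ((y' : H))⟫ = ⟪(x : H), A y'⟫ :=
    LinearPMap.adjoint_isFormalAdjoint hdense x y'
  simp only [omegaForm, h1]
  rw [show ((y : H)) = ((y' : H)) from rfl, h2, sub_self]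

lemma omegaForm_conj (A : H →ₗ.[ℂ] H) (x y : A.adjoint.domain) :
    omegaForm A x y = -(starRingEnd ℂ) (omegaForm A y x) := by
  simp only [omegaForm, map_sub, inner_conj_symm]
  ring

lemma omegaForm_left_zero (A : H →ₗ.[ℂ] H) (hdense : Dense (A.domain : Set H))
    (hsym : ∀ x y : A.domain, ⟪A x, (y : H)⟫ = ⟪(x : H), A y⟫)
    (x y : A.adjoint.domain) (hx : (x : H) ∈ A.domain) :
    omegaForm A x y = 0 := by
  rw [omegaForm_conj, omegaForm_right_zero A hdense hsym y x hx, map_zero, neg_zero]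

lemma omegaForm_add_left (A : H →ₗ.[ℂ] H) (x x' y : A.adjoint.domain) :
    omegaForm A (x + x') y = omegaForm A x y + omegaForm A x' y := by
  simp only [omegaForm, LinearPMap.map_add, Submodule.coe_add, inner_add_left, inner_add_right]
  ring

lemma omegaForm_add_right (A : H →ₗ.[ℂ] H) (x y y' : A.adjoint.domain) :
    omegaForm A x (y + y') = omegaForm A x y + omegaForm A x y' := by
  simp only [omegaForm, LinearPMap.map_add, Submodule.coe_add, inner_add_left, inner_add_right]
  ring

/-- `ω̂` computed via `γ` agrees with `ω` on representatives. -/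
lemma omegaHat_gamma (A : H →ₗ.[ℂ] H) (hdense : Dense (A.domain : Set H))
    (hsym : ∀ x y : A.domain, ⟪A x, (y : H)⟫ = ⟪(x : H), A y⟫)
    (x y : A.adjoint.domain) :
    omegaHat A (gammaMap A x) (gammaMap A y) = omegaForm A x y := by
  set u := Quotient.out (gammaMap A x) with hu
  set v := Quotient.out (gammaMap A y) with hv
  have hmu : Submodule.Quotient.mk u = gammaMap A x := Quotient.out_eq _
  have hmv : Submodule.Quotient.mk v = gammaMap A y := Quotient.out_eq _
  have hux : u - x ∈ minDom A := by
    rw [← Submodule.Quotient.eq]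
    exact hmu
  have hvy : v - y ∈ minDom A := by
    rw [← Submodule.Quotient.eq]
    exact hmv
  have hux' : ((u - x : A.adjoint.domain) : H) ∈ A.domain := hux
  have hvy' : ((v - y : A.adjoint.domain) : H) ∈ A.domain := hvy
  have heu : u = x + (u - x) := by abel
  have hev : v = y + (v - y) := by abel
  calc omegaHat A (gammaMap A x) (gammaMap A y)
      = omegaForm A u v := rfl
    _ = omegaForm A (x + (u - x)) (y + (v - y)) := by rw [← heu, ← hev]
    _ = omegaForm A x y := by
        rw [omegaForm_add_left, omegaForm_add_right, omegaForm_add_right,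
          omegaForm_right_zero A hdense hsym x _ hvy',
          omegaForm_left_zero A hdense hsym _ _ hux',
          omegaForm_left_zero A hdense hsym _ _ hux']
        ring

/-- If `L ⊆ β(A)` is a Lagrangian subspace, i.e. `L` equals its `ω̂`-annihilator,
then `D := γ⁻¹(L) = {x ∈ dom A† : γ(x) ∈ L}` satisfies `dom A ⊆ D ⊆ dom A†` and the extension
`A_D := A†|_D` is self-adjoint. -/
theorem lagrangian_gives_selfAdjoint_extension
    [TopologicalSpace.SeparableSpace H]
    (A : H →ₗ.[ℂ] H)
    (hdense : Dense (A.domain : Set H))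
    (hclosed : IsClosed (A.graph : Set (H × H)))
    (hsym : ∀ x y : A.domain, ⟪A x, (y : H)⟫ = ⟪(x : H), A y⟫)
    (L : Submodule ℂ (beta A))
    (hL : (L : Set (beta A)) = {v : beta A | ∀ w ∈ L, omegaHat A v w = 0}) :
    minDom A ≤ Submodule.comap (gammaMap A) L ∧
    IsSelfAdjoint (adjRestrict A (Submodule.comap (gammaMap A) L)) := by
  set B := A.adjoint with hB
  set D := Submodule.comap (gammaMap A) L with hD
  set Dd := D.map B.domain.subtype with hDd
  set T := adjRestrict A D with hT
  have hAadj : A ≤ B := le_adjoint_of_symm A hdense hsym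
  -- membership in `Dd`
  have hmemDd : ∀ x : B.domain, ((x : H) ∈ Dd ↔ gammaMap A x ∈ L) := by
    intro x
    constructor
    · rintro ⟨d, hd, hdx⟩
      have : d = x := Subtype.ext hdx
      rwa [this] at hd
    · intro hx
      exact ⟨x, hx, rfl⟩
  -- first conjunct
  have hminD : minDom A ≤ D := by
    intro x hx
    have : gammaMap A x = 0 := (Submodule.Quotient.mk_eq_zero _).mpr hx
    simpa [hD, Submodule.mem_comap, this] using L.zero_mem
  refine ⟨hminD, ?_⟩
  have hTdom : T.domain = Dd ⊓ B.domain := rfl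
  -- `A ≤ T`
  have hAT : A ≤ T := by
    constructor
    · intro a ha
      have haB : a ∈ B.domain := hAadj.1 ha
      have : a ∈ Dd := (hmemDd ⟨a, haB⟩).mpr (hminD (by exact ha))
      exact Submodule.mem_inf.mpr ⟨this, haB⟩
    · intro x y hxy
      have h1 : T y = B ⟨(y : H), y.2.2⟩ := LinearPMap.domRestrict_apply rfl
      have h2 : A x = B ⟨(y : H), y.2.2⟩ := hAadj.2 hxy
      rw [h1, h2]
  have hTdense : Dense (T.domain : Set H) := hdense.mono (fun z hz => hAT.1 hz)
  -- symmetry of `T`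
  have hTapp : ∀ x : T.domain, T x = B ⟨(x : H), x.2.2⟩ :=
    fun x => LinearPMap.domRestrict_apply rfl
  have hgammaL : ∀ x : T.domain, gammaMap A ⟨(x : H), x.2.2⟩ ∈ L :=
    fun x => (hmemDd ⟨(x : H), x.2.2⟩).mp x.2.1
  have hTsym : T.IsFormalAdjoint T := by
    intro x y
    set x' : B.domain := ⟨(x : H), x.2.2⟩
    set y' : B.domain := ⟨(y : H), y.2.2⟩
    have hxL : gammaMap A x' ∈ (L : Set (beta A)) := hgammaL x
    rw [hL] at hxL
    have h0 : omegaForm A x' y' = 0 := by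
      rw [← omegaHat_gamma A hdense hsym]
      exact hxL _ (hgammaL y)
    have : ⟪B x', (y' : H)⟫ - ⟪(x' : H), B y'⟫ = 0 := h0
    rw [hTapp x, hTapp y]
    rw [sub_eq_zero] at this
    exact this
  have hTle : T ≤ T.adjoint := LinearPMap.IsFormalAdjoint.le_adjoint hTdense hTsym
  -- `T† ≤ B`
  have hT'fa : T.adjoint.IsFormalAdjoint A := by
    intro x y
    have hyT : (y : H) ∈ T.domain := hAT.1 y.2
    have h1 : ⟪T.adjoint x, ((⟨(y : H), hyT⟩ : T.domain) : H)⟫ = ⟪(x : H), T ⟨(y : H), hyT⟩⟫ :=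
      LinearPMap.adjoint_isFormalAdjoint hTdense x ⟨(y : H), hyT⟩
    have h2 : A y = T ⟨(y : H), hyT⟩ := hAT.2 rfl
    rw [h2]
    exact h1
  have hT'B : T.adjoint ≤ B := LinearPMap.IsFormalAdjoint.le_adjoint hdense hT'fa.symm
  -- `T† ≤ T`
  have hT'le : T.adjoint ≤ T := by
    have hdom : T.adjoint.domain ≤ T.domain := by
      intro z hz
      set x : T.adjoint.domain := ⟨z, hz⟩
      set x' : B.domain := ⟨z, hT'B.1 hz⟩
      have hval : T.adjoint x = B x' := hT'B.2 rfl
      have hxL : gammaMap A x' ∈ L := by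
        rw [← SetLike.mem_coe, hL]
        intro w hw
        set y := Quotient.out w with hy
        have hyw : gammaMap A y = w := Quotient.out_eq w
        have hyT : (y : H) ∈ T.domain := by
          refine Submodule.mem_inf.mpr ⟨(hmemDd y).mpr ?_, y.2⟩
          rw [hyw]; exact hw
        have h1 : ⟪T.adjoint x, ((⟨(y : H), hyT⟩ : T.domain) : H)⟫
            = ⟪(x : H), T ⟨(y : H), hyT⟩⟫ :=
          LinearPMap.adjoint_isFormalAdjoint hTdense x ⟨(y : H), hyT⟩
        have h2 : T ⟨(y : H), hyT⟩ = B ⟨(y : H), y.2⟩ := LinearPMap.domRestrict_apply rfl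
        have h3 : B ⟨(y : H), y.2⟩ = B y := by congr
        have h0 : omegaForm A x' y = 0 := by
          show ⟪B x', (y : H)⟫ - ⟪(x' : H), B y⟫ = 0
          rw [sub_eq_zero, ← hval, ← h3, ← h2]
          exact h1
        calc omegaHat A (gammaMap A x') w
            = omegaHat A (gammaMap A x') (gammaMap A y) := by rw [hyw]
          _ = omegaForm A x' y := omegaHat_gamma A hdense hsym x' y
          _ = 0 := h0
      exact Submodule.mem_inf.mpr ⟨(hmemDd x').mpr hxL, hT'B.1 hz⟩
    refine ⟨hdom, ?_⟩
    intro x y hxy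
    have h1 : T y = B ⟨(y : H), y.2.2⟩ := LinearPMap.domRestrict_apply rfl
    have h2 : T.adjoint x = B ⟨(y : H), y.2.2⟩ := hT'B.2 hxy
    rw [h1, h2]
  rw [LinearPMap.isSelfAdjoint_def]
  exact le_antisymm hT'le hTle
end
end

section
/- Let A be a densely defined closed symmetric operator on a complex separable Hilbert space H, and let D be a subspace with dom(A) ⊆ D ⊆ dom(A*) such that A_D := A*|_D is self-adjoint and bijective as a map D → H (0 is in the resolvent set of A_D). Then dom(A*) decomposes as the algebraic direct sum dom(A*) = D ⊕ ker(A*): every x ∈ dom(A*) can be written uniquely as x = d + k with d ∈ D and k ∈ dom(A*), A*k = 0. -/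
open scoped ComplexInnerProductSpace

noncomputable section

variable {H : Type*} [NormedAddCommGroup H] [InnerProductSpace ℂ H] [CompleteSpace H]

/-- If `dom A ⊆ D ⊆ dom A†`, the extension `A_D := A†|_D` is self-adjoint, and
`A_D : D → H` is bijective (i.e. `0` is in the resolvent set of `A_D`), then
`dom A† = D ⊕ ker A†` algebraically: every `x ∈ dom A†` is uniquely `x = d + k` with
`d ∈ D` and `A† k = 0`. -/
theorem domain_decomposition_of_invertible_selfAdjoint_extension
    [TopologicalSpace.SeparableSpace H]
    (A : H →ₗ.[ℂ] H)
    (hdense : Dense (A.domain : Set H))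
    (hclosed : IsClosed (A.graph : Set (H × H)))
    (hsym : ∀ x y : A.domain, ⟪A x, (y : H)⟫ = ⟪(x : H), A y⟫)
    (D : Submodule ℂ A.adjoint.domain)
    (hD : minDom A ≤ D)
    (hsa : IsSelfAdjoint (adjRestrict A D))
    (hbij : Function.Bijective fun d : D => A.adjoint (d : A.adjoint.domain)) :
    ∀ x : A.adjoint.domain,
      ∃! p : A.adjoint.domain × A.adjoint.domain,
        x = p.1 + p.2 ∧ p.1 ∈ D ∧ A.adjoint p.2 = 0 := by
  intro x
  obtain ⟨d, hd⟩ := hbij.surjective (A.adjoint x)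
  have hd' : A.adjoint (d : A.adjoint.domain) = A.adjoint x := hd
  refine ⟨((d : A.adjoint.domain), x - d), ⟨(add_sub_cancel _ _).symm, d.2, ?_⟩, ?_⟩
  · show A.adjoint (x - (d : A.adjoint.domain)) = 0
    rw [A.adjoint.map_sub, hd', sub_self]
  · rintro ⟨q1, q2⟩ ⟨hx, hq1, hq2⟩
    simp only at hx hq1 hq2
    have h1 : A.adjoint q1 = A.adjoint x := by
      rw [hx, A.adjoint.map_add, hq2, add_zero]
    have h2 : (⟨q1, hq1⟩ : D) = d := hbij.injective (by simpa [hd'] using h1)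
    have h3 : q1 = (d : A.adjoint.domain) := congrArg Subtype.val h2
    refine Prod.ext h3 ?_
    rw [hx, h3, add_sub_cancel_left]
end
end

section
/- Let A be a densely defined closed symmetric operator on a complex separable Hilbert space H, and suppose there exists a subspace D with dom(A) ⊆ D ⊆ dom(A*) such that A_D := A*|_D is self-adjoint and bijective as a map D → H. Then the natural Cauchy data space CD(A) := γ(ker A*) = {γ(x) : x ∈ dom(A*), A*x = 0} is a Lagrangian subspace of (β(A), ω̂): ω̂ vanishes on CD(A) × CD(A) and CD(A) equals its ω̂-annihilator {v ∈ β(A) : ω̂(v, w) = 0 for all w ∈ CD(A)}. -/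
open scoped ComplexInnerProductSpace

noncomputable section

variable {H : Type*} [NormedAddCommGroup H] [InnerProductSpace ℂ H] [CompleteSpace H]

/-- The natural Cauchy data space `CD(A) := γ(ker A†) ⊆ β(A)`. -/
def cauchyData (A : H →ₗ.[ℂ] H) : Submodule ℂ (beta A) :=
  (LinearMap.ker A.adjoint.toFun).map (gammaMap A)

open LinearPMap

/-- The graph of the adjoint of a densely defined operator is closed. -/
theorem adjoint_graph_isClosed (B : H →ₗ.[ℂ] H) (hB : Dense (B.domain : Set H)) :
    IsClosed (B.adjoint.graph : Set (H × H)) := by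
  apply IsSeqClosed.isClosed
  intro u p hu hup
  have key : ∀ x : B.domain, ⟪p.2, (x : H)⟫ = ⟪p.1, B x⟫ := by
    intro x
    set φ : H × H → ℂ := fun q => ⟪q.2, (x : H)⟫ - ⟪q.1, B x⟫ with hφdef
    have hφ : Continuous φ :=
      (continuous_snd.inner continuous_const).sub (continuous_fst.inner continuous_const)
    have h0 : ∀ n, φ (u n) = 0 := by
      intro n
      obtain ⟨y, hy1, hy2⟩ := B.adjoint.mem_graph_iff.mp (hu n)
      simp only [hφdef, ← hy1, ← hy2, adjoint_isFormalAdjoint hB y x, sub_self]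
    have hl : Filter.Tendsto (fun n => φ (u n)) Filter.atTop (nhds (φ p)) :=
      (hφ.tendsto p).comp hup
    have : φ p = 0 := by
      have h2 : Filter.Tendsto (fun _ : ℕ => (0 : ℂ)) Filter.atTop (nhds (φ p)) := by
        simpa [h0] using hl
      exact tendsto_nhds_unique h2 tendsto_const_nhds
    exact sub_eq_zero.mp this
  have hpd : p.1 ∈ B.adjoint.domain := mem_adjoint_domain_of_exists _ ⟨p.2, key⟩
  have hval : B.adjoint ⟨p.1, hpd⟩ = p.2 := adjoint_apply_eq hB _ key
  exact B.adjoint.mem_graph_iff.mpr ⟨⟨p.1, hpd⟩, rfl, hval⟩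

section OmegaLemmas

variable (A : H →ₗ.[ℂ] H) (hdense : Dense (A.domain : Set H))
  (hle : A ≤ A.adjoint)

theorem gamma_out (v : beta A) : gammaMap A (Quotient.out v) = v :=
  Quotient.out_eq v

include hdense hle in
theorem omegaForm_left_zero_s9 (m y : A.adjoint.domain) (hm : (m : H) ∈ A.domain) :
    omegaForm A m y = 0 := by
  set m' : A.domain := ⟨(m : H), hm⟩ with hm'
  have hmm : (m' : H) = (m : H) := rfl
  have h1 : A m' = A.adjoint m := hle.2 hmm
  have h2 : ⟪A.adjoint y, (m' : H)⟫ = ⟪(y : H), A m'⟫ :=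
    adjoint_isFormalAdjoint hdense y m'
  have h3 : ⟪(m : H), A.adjoint y⟫ = ⟪A m', (y : H)⟫ := by
    rw [← inner_conj_symm, ← hmm, h2, inner_conj_symm]
  rw [omegaForm, ← h1, h3, sub_self]

theorem omegaForm_antisymm (x y : A.adjoint.domain) :
    omegaForm A x y = -(starRingEnd ℂ) (omegaForm A y x) := by
  simp only [omegaForm, _root_.map_sub, inner_conj_symm]
  ring

include hdense hle in
theorem omegaForm_right_zero_s9 (x m : A.adjoint.domain) (hm : (m : H) ∈ A.domain) :
    omegaForm A x m = 0 := by
  rw [omegaForm_antisymm, omegaForm_left_zero_s9 A hdense hle m x hm, _root_.map_zero, neg_zero]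

include hdense hle in
theorem omegaForm_congr {x x' y y' : A.adjoint.domain}
    (hx : gammaMap A x = gammaMap A x') (hy : gammaMap A y = gammaMap A y') :
    omegaForm A x y = omegaForm A x' y' := by
  have hxm : ((x - x' : A.adjoint.domain) : H) ∈ A.domain := by
    have := (Submodule.Quotient.eq (minDom A)).mp hx
    simpa [minDom] using this
  have hym : ((y - y' : A.adjoint.domain) : H) ∈ A.domain := by
    have := (Submodule.Quotient.eq (minDom A)).mp hy
    simpa [minDom] using this
  have h1 := omegaForm_left_zero_s9 A hdense hle (x - x') y hxm
  have h2 := omegaForm_right_zero_s9 A hdense hle x' (y - y') hym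
  simp only [omegaForm, LinearPMap.map_sub, inner_sub_left, inner_sub_right,
    Submodule.coe_sub] at h1 h2 ⊢
  linear_combination h1 + h2

include hdense hle in
theorem omegaHat_mk (x y : A.adjoint.domain) :
    omegaHat A (gammaMap A x) (gammaMap A y) = omegaForm A x y :=
  omegaForm_congr A hdense hle (gamma_out A (gammaMap A x)) (gamma_out A (gammaMap A y))

end OmegaLemmas

/-- If some intermediate extension `A_D` (with `dom A ⊆ D ⊆ dom A†`) is
self-adjoint and bijective `D → H`, then the natural Cauchy data space `CD(A) = γ(ker A†)`
is a Lagrangian subspace of `(β(A), ω̂)`: `ω̂` vanishes on `CD(A) × CD(A)` and `CD(A)` equals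
its `ω̂`-annihilator. -/
theorem cauchyData_lagrangian
    [TopologicalSpace.SeparableSpace H]
    (A : H →ₗ.[ℂ] H)
    (hdense : Dense (A.domain : Set H))
    (hclosed : IsClosed (A.graph : Set (H × H)))
    (hsym : ∀ x y : A.domain, ⟪A x, (y : H)⟫ = ⟪(x : H), A y⟫)
    (hex : ∃ D : Submodule ℂ A.adjoint.domain, minDom A ≤ D ∧
        IsSelfAdjoint (adjRestrict A D) ∧
        Function.Bijective fun d : D => A.adjoint (d : A.adjoint.domain)) :
    (∀ v ∈ cauchyData A, ∀ w ∈ cauchyData A, omegaHat A v w = 0) ∧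
    {v : beta A | ∀ w ∈ cauchyData A, omegaHat A v w = 0}
      = (cauchyData A : Set (beta A)) := by
  obtain ⟨D, hDle, hSA, hbij⟩ := hex
  have hsym' : A.IsFormalAdjoint A := hsym
  have hle : A ≤ A.adjoint := hsym'.le_adjoint hdense
  -- Part (a)
  have pa : ∀ v ∈ cauchyData A, ∀ w ∈ cauchyData A, omegaHat A v w = 0 := by
    rintro v hv w hw
    obtain ⟨x, hx, rfl⟩ := Submodule.mem_map.mp hv
    obtain ⟨y, hy, rfl⟩ := Submodule.mem_map.mp hw
    rw [omegaHat_mk A hdense hle]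
    have hx0 : A.adjoint x = 0 := LinearMap.mem_ker.mp hx
    have hy0 : A.adjoint y = 0 := LinearMap.mem_ker.mp hy
    simp [omegaForm, hx0, hy0]
  refine ⟨pa, ?_⟩
  -- Range of A as a submodule of H
  set R : Submodule ℂ H := LinearMap.range A.toFun with hR
  have hform := adjoint_isFormalAdjoint hdense
  -- elements of `Rᗮ` are in the kernel of the adjoint
  have horth_ker : ∀ y : H, y ∈ Rᗮ → ∃ hy : y ∈ A.adjoint.domain,
      A.adjoint ⟨y, hy⟩ = 0 := by
    intro y hy
    have hinner : ∀ x : A.domain, ⟪(0 : H), (x : H)⟫ = ⟪y, A x⟫ := by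
      intro x
      have h1 : ⟪A x, y⟫ = 0 :=
        (Submodule.mem_orthogonal _ _).mp hy (A x) ⟨x, rfl⟩
      rw [inner_zero_left, ← inner_conj_symm, h1, _root_.map_zero]
    have hyd : y ∈ A.adjoint.domain := mem_adjoint_domain_of_exists y ⟨0, hinner⟩
    exact ⟨hyd, adjoint_apply_eq hdense ⟨y, hyd⟩ hinner⟩
  -- the self-adjoint restriction has closed graph
  have hSdense : Dense ((adjRestrict A D).domain : Set H) := hSA.dense_domain
  have hSeq : (adjRestrict A D).adjoint = adjRestrict A D := hSA
  have hSgraph : IsClosed ((adjRestrict A D).graph : Set (H × H)) := by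
    have := adjoint_graph_isClosed (adjRestrict A D) hSdense
    rwa [hSeq] at this
  -- the inverse of the bijective restriction, as a linear map on `H`
  set f : D →ₗ[ℂ] H := A.adjoint.toFun ∘ₗ D.subtype with hf
  have hbijf : Function.Bijective f := hbij
  set e : D ≃ₗ[ℂ] H := LinearEquiv.ofBijective f hbijf with he
  set g : H →ₗ[ℂ] H :=
    (A.adjoint.domain.subtype ∘ₗ D.subtype) ∘ₗ (e.symm : H →ₗ[ℂ] D) with hg
  have hg_apply : ∀ z : H, g z = ((e.symm z : A.adjoint.domain) : H) := fun z => rfl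
  have he_apply : ∀ d : D, e d = f d := fun d => rfl
  -- graph of `g` is the swap of the graph of `adjRestrict A D`
  have hgraphEq : (LinearMap.graph g : Set (H × H))
      = Prod.swap '' ((adjRestrict A D).graph : Set (H × H)) := by
    rw [Set.image_swap_eq_preimage_swap]
    ext ⟨a, b⟩
    simp only [SetLike.mem_coe, LinearMap.mem_graph_iff, Set.mem_preimage, Prod.swap_prod_mk]
    constructor
    · rintro hb
      set d : D := e.symm a with hd
      have hbd : b = ((d : A.adjoint.domain) : H) := by rw [hb, hg_apply]
      have hbmem : b ∈ (adjRestrict A D).domain := by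
        rw [adjRestrict, domRestrict_domain, Submodule.mem_inf]
        exact ⟨⟨(d : A.adjoint.domain), d.2, hbd.symm⟩, hbd ▸ (d : A.adjoint.domain).2⟩
      refine (adjRestrict A D).mem_graph_iff.mpr ⟨⟨b, hbmem⟩, rfl, ?_⟩
      have hval : adjRestrict A D ⟨b, hbmem⟩ = A.adjoint (d : A.adjoint.domain) :=
        domRestrict_apply hbd
      rw [hval]
      show f d = a
      rw [← he_apply, hd, e.apply_symm_apply]
    · intro hab
      obtain ⟨y, hy1, hy2⟩ := (adjRestrict A D).mem_graph_iff.mp hab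
      have hy1' : (y : H) = b := hy1
      have hy2' : adjRestrict A D y = a := hy2
      have hy' : (y : H) ∈ (D.map A.adjoint.domain.subtype) ⊓ A.adjoint.domain := by
        rw [← domRestrict_domain]; exact y.2
      obtain ⟨t, htD, htb⟩ := hy'.1
      have htb' : (y : H) = (t : H) := htb.symm
      have hval : adjRestrict A D y = A.adjoint t := domRestrict_apply htb'
      have hfa : f ⟨t, htD⟩ = a := by rw [← hy2', hval]; rfl
      have hga : g a = (t : H) := by
        rw [← hfa, hg_apply, ← he_apply, e.symm_apply_apply]
      show b = g a
      rw [hga, ← hy1']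
      exact htb'
  have hgclosed : IsClosed (LinearMap.graph g : Set (H × H)) := by
    rw [hgraphEq, ← Homeomorph.coe_prodComm]
    exact (Homeomorph.prodComm H H).isClosed_image.mpr hSgraph
  have hgcont : Continuous g := g.continuous_of_isClosed_graph hgclosed
  -- `g` inverts `A` on its range
  have hgA : ∀ x : A.domain, g (A x) = (x : H) := by
    intro x
    have hxT : (x : H) ∈ A.adjoint.domain := hle.1 x.2
    have hmemD : (⟨(x : H), hxT⟩ : A.adjoint.domain) ∈ D := hDle x.2
    set d : D := ⟨⟨(x : H), hxT⟩, hmemD⟩ with hd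
    have hfd : f d = A x := (hle.2 (rfl : ((x : A.domain) : H) = _)).symm
    rw [← hfd, hg_apply, ← he_apply, e.symm_apply_apply]
  -- the range of `A` is closed
  have hRclosed : IsClosed (R : Set H) := by
    apply IsSeqClosed.isClosed
    intro u y hu huy
    choose xs hxs using fun n => hu n
    have h1 : ∀ n, ((xs n : H), A (xs n)) ∈ A.graph := fun n =>
      A.mem_graph_iff.mpr ⟨xs n, rfl, rfl⟩
    have h2 : Filter.Tendsto (fun n => ((xs n : H), A (xs n))) Filter.atTop
        (nhds (g y, y)) := by
      refine Filter.Tendsto.prodMk_nhds ?_ ?_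
      · have : (fun n => ((xs n : H))) = fun n => g (u n) := by
          funext n; rw [← hxs n]; exact (hgA (xs n)).symm
        rw [this]
        exact ((hgcont.tendsto y).comp huy)
      · have : (fun n => A (xs n)) = u := by funext n; exact hxs n
        rw [this]; exact huy
    have h3 : (g y, y) ∈ A.graph :=
      hclosed.isSeqClosed h1 h2
    obtain ⟨z, hz1, hz2⟩ := A.mem_graph_iff.mp h3
    exact ⟨z, hz2⟩
  -- Part (b)
  ext v
  simp only [Set.mem_setOf_eq, SetLike.mem_coe]
  constructor
  · intro hv
    have hγx : gammaMap A (Quotient.out v) = v := gamma_out A v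
    set x : A.adjoint.domain := Quotient.out v with hx
    have hxk : ∀ k : A.adjoint.domain, A.adjoint k = 0 → ⟪A.adjoint x, (k : H)⟫ = 0 := by
      intro k hk
      have h1 : omegaHat A v (gammaMap A k) = 0 :=
        hv _ (Submodule.mem_map.mpr ⟨k, LinearMap.mem_ker.mpr hk, rfl⟩)
      rw [← hγx, omegaHat_mk A hdense hle] at h1
      simpa [omegaForm, hk] using h1
    have hTxR : A.adjoint x ∈ R := by
      have hmem : A.adjoint x ∈ Rᗮᗮ := by
        rw [Submodule.mem_orthogonal]
        intro u hu
        obtain ⟨hud, hu0⟩ := horth_ker u hu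
        have h4 := hxk ⟨u, hud⟩ hu0
        rw [← inner_conj_symm, h4, _root_.map_zero]
      rwa [Submodule.orthogonal_orthogonal_eq_closure,
        hRclosed.submodule_topologicalClosure_eq] at hmem
    obtain ⟨m, hm⟩ := hTxR
    set m' : A.adjoint.domain := ⟨(m : H), hle.1 m.2⟩ with hm'
    have hTm' : A.adjoint m' = A m := (hle.2 (rfl : ((m : A.domain) : H) = _)).symm
    have hm2 : A m = A.adjoint x := hm
    have hker : A.adjoint (x - m') = 0 := by
      rw [LinearPMap.map_sub, hTm', hm2, sub_self]
    have hxeq : gammaMap A x = gammaMap A (x - m') := by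
      rw [gammaMap, Submodule.mkQ_apply, Submodule.mkQ_apply, Submodule.Quotient.eq]
      have : x - (x - m') = m' := by abel
      rw [this]
      exact m.2
    exact Submodule.mem_map.mpr ⟨x - m', LinearMap.mem_ker.mpr hker, by rw [← hxeq, hγx]⟩
  · intro hv w hw
    exact pa v hv w hw
end
end

section
/- Let A be a densely defined closed symmetric operator on a complex separable Hilbert space H, and let D be a subspace with dom(A) ⊆ D ⊆ dom(A*) such that A_D := A*|_D is a self-adjoint Fredholm operator (ker(A_D) is finite-dimensional and the range of A_D is closed with finite codimension in H). Then CD(A) := γ(ker A*) and γ(D) form a Fredholm pair of subspaces of β(A): both are closed in β(A), their intersection CD(A) ∩ γ(D) is finite-dimensional, and their sum CD(A) + γ(D) is closed and of finite codimension in β(A). -/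
open scoped ComplexInnerProductSpace

noncomputable section

variable {H : Type*} [NormedAddCommGroup H] [InnerProductSpace ℂ H] [CompleteSpace H]

/-- The graph norm on the domain of the adjoint `A†`. -/
def graphNorm (A : H →ₗ.[ℂ] H) (x : A.adjoint.domain) : ℝ :=
  Real.sqrt (‖(x : H)‖ ^ 2 + ‖A.adjoint x‖ ^ 2)

/-- The quotient norm on `β(A)` induced by the graph norm of `A†`. -/
def quotNorm (A : H →ₗ.[ℂ] H) (v : beta A) : ℝ :=
  sInf (graphNorm A '' {x : A.adjoint.domain | Submodule.Quotient.mk x = v})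

/-- The restriction of `A†` to an intermediate subspace `D`, as a linear map `D → H`. -/
def restrictMap (A : H →ₗ.[ℂ] H) (D : Submodule ℂ A.adjoint.domain) : D →ₗ[ℂ] H :=
  A.adjoint.toFun.comp D.subtype

/-! ### Auxiliary general lemmas -/

/-- The sum of a closed submodule and a finite-dimensional submodule is closed. -/
lemma CFP.isClosed_sup_fd {E : Type*} [NormedAddCommGroup E] [NormedSpace ℂ E]
    (S K : Submodule ℂ E) (hS : IsClosed (S : Set E)) (hK : FiniteDimensional ℂ K) :
    IsClosed ((S ⊔ K : Submodule ℂ E) : Set E) := by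
  haveI := hS
  haveI : FiniteDimensional ℂ (K.map S.mkQ) := Module.Finite.map K S.mkQ
  have hclosed : IsClosed ((K.map S.mkQ : Submodule ℂ (E ⧸ S)) : Set (E ⧸ S)) :=
    Submodule.closed_of_finiteDimensional _
  have hmkc : Continuous (S.mkQ : E →ₗ[ℂ] E ⧸ S) := by
    refine LipschitzWith.continuous (K := 1) (LipschitzWith.of_dist_le_mul (fun x y => ?_))
    simp only [NNReal.coe_one, one_mul, dist_eq_norm, ← map_sub]
    exact Submodule.Quotient.norm_mk_le S (x - y)
  have heq : ((S ⊔ K : Submodule ℂ E) : Set E) = S.mkQ ⁻¹' (K.map S.mkQ : Set (E ⧸ S)) := by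
    rw [← Submodule.comap_coe, Submodule.comap_map_eq, Submodule.ker_mkQ, sup_comm]
  rw [heq]
  exact hclosed.preimage hmkc

/-- The image of a closed submodule `M ≤ G` under a continuous linear map which has
closed image on `G` and finite-dimensional "kernel in `G`" is closed. -/
lemma CFP.isClosed_image_of_controlled
    {E F : Type*} [NormedAddCommGroup E] [NormedSpace ℂ E] [CompleteSpace E]
    [NormedAddCommGroup F] [NormedSpace ℂ F] [CompleteSpace F]
    (f : E →L[ℂ] F) (G M : Submodule ℂ E) (hMG : M ≤ G)
    (hG : IsClosed (G : Set E)) (hM : IsClosed (M : Set E))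
    (hK : FiniteDimensional ℂ ((G ⊓ LinearMap.ker (f : E →ₗ[ℂ] F) : Submodule ℂ E) : Type _))
    (hR : IsClosed (f '' (G : Set E))) :
    IsClosed (f '' (M : Set E)) := by
  set K : Submodule ℂ E := G ⊓ LinearMap.ker (f : E →ₗ[ℂ] F) with hKdef
  set S : Submodule ℂ E := M ⊔ K with hSdef
  have hKG : K ≤ G := inf_le_left
  have hSG : S ≤ G := sup_le hMG hKG
  have hS : IsClosed (S : Set E) := CFP.isClosed_sup_fd M K hM hK
  haveI : CompleteSpace S := hS.completeSpace_coe
  haveI : CompleteSpace G := hG.completeSpace_coe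
  set R : Submodule ℂ F := G.map (f : E →ₗ[ℂ] F) with hRdef
  have hRset : (R : Set F) = f '' (G : Set E) := rfl
  haveI : CompleteSpace R := by
    refine (?_ : IsClosed (R : Set F)).completeSpace_coe
    rw [hRset]; exact hR
  set φG : G →L[ℂ] R := (f.comp G.subtypeL).codRestrict R
    (fun x => ⟨(x : E), x.2, rfl⟩) with hφGdef
  have hsurj : Function.Surjective φG := by
    rintro ⟨y, g, hg, rfl⟩
    exact ⟨⟨g, hg⟩, rfl⟩
  obtain ⟨C, hC0, hC⟩ := φG.exists_preimage_norm_le hsurj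
  set K' : Submodule ℂ S := K.comap S.subtype with hK'def
  set ψ₀ : S →ₗ[ℂ] F := (f : E →ₗ[ℂ] F).comp S.subtype with hψ₀def
  have hker : K' ≤ LinearMap.ker ψ₀ := by
    intro k hk
    simp only [LinearMap.mem_ker, hψ₀def, LinearMap.comp_apply]
    exact hk.2
  set ψ : (S ⧸ K') →ₗ[ℂ] F := K'.liftQ ψ₀ hker with hψdef
  set φS : S →L[ℂ] F := f.comp S.subtypeL with hφSdef
  have hψmk : ∀ s : S, ψ (Submodule.Quotient.mk s) = f (s : E) := fun s => rfl
  have hbound : ∀ q, ‖ψ q‖ ≤ ‖φS‖ * ‖q‖ := by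
    intro q
    refine le_of_forall_pos_le_add (fun ε hε => ?_)
    have hd : (0:ℝ) < ‖φS‖ + 1 := by positivity
    obtain ⟨m, hm, hmlt⟩ := Submodule.Quotient.norm_mk_lt q (div_pos hε hd)
    have h1 : ψ q = φS m := by rw [← hm]; exact hψmk m
    have h2 : ‖φS m‖ ≤ ‖φS‖ * ‖m‖ := φS.le_opNorm m
    have h3 : ‖φS‖ * ‖m‖ ≤ ‖φS‖ * (‖q‖ + ε / (‖φS‖ + 1)) :=
      mul_le_mul_of_nonneg_left hmlt.le φS.opNorm_nonneg
    have h4 : ‖φS‖ * (ε / (‖φS‖ + 1)) ≤ ε := by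
      calc ‖φS‖ * (ε / (‖φS‖ + 1)) ≤ (‖φS‖ + 1) * (ε / (‖φS‖ + 1)) :=
            mul_le_mul_of_nonneg_right (by linarith [φS.opNorm_nonneg]) (by positivity)
        _ = ε := by field_simp
    rw [h1]
    calc ‖φS m‖ ≤ ‖φS‖ * (‖q‖ + ε / (‖φS‖ + 1)) := le_trans h2 h3
    _ = ‖φS‖ * ‖q‖ + ‖φS‖ * (ε / (‖φS‖ + 1)) := by ring
    _ ≤ ‖φS‖ * ‖q‖ + ε := by linarith
  set ψc : (S ⧸ K') →L[ℂ] F := ψ.mkContinuous ‖φS‖ hbound with hψcdef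
  have hanti : ∀ q, ‖q‖ ≤ C.toNNReal * ‖ψc q‖ := by
    intro q
    obtain ⟨s, rfl⟩ := Submodule.Quotient.mk_surjective K' q
    have hfsR : f (s : E) ∈ R := ⟨(s : E), hSG s.2, rfl⟩
    obtain ⟨x, hx1, hx2⟩ := hC ⟨f (s : E), hfsR⟩
    have hfx : f ((x : E)) = f (s : E) := congrArg Subtype.val hx1
    have hkK : ((s : E) - (x : E)) ∈ K := by
      refine ⟨sub_mem (hSG s.2) x.2, LinearMap.mem_ker.2 ?_⟩
      rw [map_sub]
      change f (s : E) - f (x : E) = 0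
      rw [hfx, sub_self]
    have hkS : ((s : E) - (x : E)) ∈ S := le_sup_right (α := Submodule ℂ E) hkK
    set k : S := ⟨(s : E) - (x : E), hkS⟩ with hkdef
    have hmkk : (Submodule.Quotient.mk k : S ⧸ K') = 0 :=
      (Submodule.Quotient.mk_eq_zero _).2 hkK
    have hmq : (Submodule.Quotient.mk s : S ⧸ K') = Submodule.Quotient.mk (s - k) := by
      rw [Submodule.Quotient.mk_sub, hmkk, sub_zero]
    have hcoe : ((s - k : S) : E) = (x : E) := by
      simp only [hkdef, Submodule.coe_sub, AddSubgroupClass.coe_sub, sub_sub_cancel]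
    have h5 : ‖(Submodule.Quotient.mk s : S ⧸ K')‖ ≤ ‖x‖ := by
      rw [hmq]
      refine le_trans (Submodule.Quotient.norm_mk_le _ _) ?_
      rw [show ‖(s - k : S)‖ = ‖((s - k : S) : E)‖ from rfl, hcoe]; rfl
    have h6 : ψc (Submodule.Quotient.mk s) = f (s : E) := hψmk s
    rw [h6]
    refine le_trans h5 (le_trans hx2 ?_)
    rw [Real.coe_toNNReal C hC0.le]
    rfl
  have hantil : AntilipschitzWith C.toNNReal ψc :=
    ψc.antilipschitz_of_bound hanti
  have hrange : IsClosed (Set.range ψc) :=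
    hantil.isClosed_range ψc.uniformContinuous
  have himeq : f '' (M : Set E) = Set.range ψc := by
    ext y
    constructor
    · rintro ⟨m, hm, rfl⟩
      exact ⟨Submodule.Quotient.mk ⟨m, (le_sup_left : M ≤ S) hm⟩, rfl⟩
    · rintro ⟨q, rfl⟩
      obtain ⟨s, rfl⟩ := Submodule.Quotient.mk_surjective K' q
      obtain ⟨m, hm, kk, hkk, hsum⟩ := Submodule.mem_sup.1 s.2
      refine ⟨m, hm, ?_⟩
      have h7 : ψc (Submodule.Quotient.mk s) = f (s : E) := hψmk s
      rw [h7, ← hsum, map_add]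
      have : f kk = 0 := hkk.2
      rw [this, add_zero]
  rw [himeq]
  exact hrange

/-- The graph of the adjoint of a densely defined operator is closed. -/
lemma CFP.adjoint_graph_isClosed {T : H →ₗ.[ℂ] H} (hT : Dense (T.domain : Set H)) :
    IsClosed (T.adjoint.graph : Set (H × H)) := by
  have hset : (T.adjoint.graph : Set (H × H)) =
      ⋂ x : T.domain, {p : H × H | ⟪p.2, (x : H)⟫ = ⟪p.1, T x⟫} := by
    ext p
    simp only [Set.mem_iInter, Set.mem_setOf_eq, SetLike.mem_coe]
    constructor
    · intro hyz x
      rcases (LinearPMap.mem_graph_iff _).1 hyz with ⟨u, hu, hz⟩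
      rw [← hz, ← hu]
      exact LinearPMap.adjoint_isFormalAdjoint hT u x
    · intro h
      have hy : p.1 ∈ T.adjoint.domain :=
        LinearPMap.mem_adjoint_domain_of_exists _ ⟨p.2, h⟩
      have : T.adjoint ⟨p.1, hy⟩ = p.2 := LinearPMap.adjoint_apply_eq hT _ (fun x => h x)
      exact (LinearPMap.mem_graph_iff _).2 ⟨⟨p.1, hy⟩, rfl, this⟩
  rw [hset]
  refine isClosed_iInter (fun x => isClosed_eq ?_ ?_)
  · exact Continuous.inner continuous_snd continuous_const
  · exact Continuous.inner continuous_fst continuous_const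

lemma CFP.norm_le_graphNorm_fst (A : H →ₗ.[ℂ] H) (z : A.adjoint.domain) :
    ‖(z : H)‖ ≤ graphNorm A z := by
  have h : ‖(z : H)‖ ^ 2 ≤ ‖(z : H)‖ ^ 2 + ‖A.adjoint z‖ ^ 2 :=
    le_add_of_nonneg_right (by positivity)
  have := Real.sqrt_le_sqrt h
  rwa [Real.sqrt_sq (norm_nonneg _)] at this

lemma CFP.norm_le_graphNorm_snd (A : H →ₗ.[ℂ] H) (z : A.adjoint.domain) :
    ‖A.adjoint z‖ ≤ graphNorm A z := by
  have h : ‖A.adjoint z‖ ^ 2 ≤ ‖(z : H)‖ ^ 2 + ‖A.adjoint z‖ ^ 2 :=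
    le_add_of_nonneg_left (by positivity)
  have := Real.sqrt_le_sqrt h
  rwa [Real.sqrt_sq (norm_nonneg _)] at this

/-- The abstract closedness criterion in `β(A)` via a closed set of Cauchy data in `H × H`. -/
lemma CFP.mem_of_quotNorm_approx (A : H →ₗ.[ℂ] H) (S : Submodule ℂ (beta A))
    (C : Set (H × H)) (hC : IsClosed C)
    (hiff : ∀ z : A.adjoint.domain,
      (((z : H), A.adjoint z) ∈ C ↔ Submodule.Quotient.mk z ∈ S))
    (v : beta A) (h : ∀ ε > (0:ℝ), ∃ w ∈ S, quotNorm A (v - w) < ε) : v ∈ S := by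
  obtain ⟨x, rfl⟩ := Submodule.Quotient.mk_surjective _ v
  have key : ∀ n : ℕ, ∃ z : A.adjoint.domain,
      Submodule.Quotient.mk (x - z) ∈ S ∧ graphNorm A z < 1 / (n + 1) := by
    intro n
    have hn : (0:ℝ) < 1 / (n + 1) := by positivity
    obtain ⟨w, hwS, hwlt⟩ := h _ hn
    have hne : (graphNorm A ''
        {z : A.adjoint.domain |
          Submodule.Quotient.mk z = (Submodule.Quotient.mk x : beta A) - w}).Nonempty := by
      obtain ⟨u, hu⟩ := Submodule.Quotient.mk_surjective _
        ((Submodule.Quotient.mk x : beta A) - w)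
      exact ⟨graphNorm A u, ⟨u, hu, rfl⟩⟩
    have hbdd : BddBelow (graphNorm A ''
        {z : A.adjoint.domain |
          Submodule.Quotient.mk z = (Submodule.Quotient.mk x : beta A) - w}) := by
      refine ⟨0, ?_⟩
      rintro r ⟨u, -, rfl⟩
      exact Real.sqrt_nonneg _
    obtain ⟨r, ⟨u, hu, rfl⟩, hrlt⟩ := (csInf_lt_iff hbdd hne).1 hwlt
    refine ⟨u, ?_, hrlt⟩
    have hm : (Submodule.Quotient.mk (x - u) : beta A) = w := by
      rw [Submodule.Quotient.mk_sub, hu]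
      abel
    rw [hm]; exact hwS
  choose z hz1 hz2 using key
  have hdist : ∀ n : ℕ,
      dist ((((x - z n : A.adjoint.domain) : H), A.adjoint (x - z n))) (((x : H), A.adjoint x))
        ≤ 1 / (n + 1) := by
    intro n
    rw [Prod.dist_eq]
    have e1 : dist (((x - z n : A.adjoint.domain)) : H) ((x : H)) = ‖((z n : H))‖ := by
      rw [dist_eq_norm]
      push_cast
      simp [sub_sub_cancel_left, norm_neg]
    have e2 : dist (A.adjoint (x - z n)) (A.adjoint x) = ‖A.adjoint (z n)‖ := by
      rw [dist_eq_norm, A.adjoint.map_sub]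
      simp [sub_sub_cancel_left, norm_neg]
    rw [e1, e2]
    exact max_le (le_trans (CFP.norm_le_graphNorm_fst A (z n)) (hz2 n).le)
      (le_trans (CFP.norm_le_graphNorm_snd A (z n)) (hz2 n).le)
  have htend : Filter.Tendsto
      (fun n : ℕ => (((x - z n : A.adjoint.domain) : H), A.adjoint (x - z n)))
      Filter.atTop (nhds (((x : H), A.adjoint x))) := by
    rw [tendsto_iff_dist_tendsto_zero]
    exact squeeze_zero (fun n => dist_nonneg) hdist tendsto_one_div_add_atTop_nhds_zero_nat
  have hmem : (((x : H), A.adjoint x)) ∈ C :=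
    hC.mem_of_tendsto htend (Filter.Eventually.of_forall (fun n => (hiff _).2 (hz1 n)))
  exact (hiff x).1 hmem

namespace CFP

variable (A : H →ₗ.[ℂ] H)

lemma le_adjoint (hdense : Dense (A.domain : Set H))
    (hsym : ∀ x y : A.domain, ⟪A x, (y : H)⟫ = ⟪(x : H), A y⟫) : A ≤ A.adjoint :=
  LinearPMap.IsFormalAdjoint.le_adjoint hdense hsym

lemma mk_mem_map_iff (W : Submodule ℂ A.adjoint.domain) (x : A.adjoint.domain) :
    (Submodule.Quotient.mk x : beta A) ∈ W.map (gammaMap A) ↔ x ∈ W ⊔ minDom A := by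
  have h := Submodule.comap_map_eq (gammaMap A) W
  rw [show LinearMap.ker (gammaMap A) = minDom A from Submodule.ker_mkQ _] at h
  constructor
  · intro hx
    rw [← h]
    exact Submodule.mem_comap.2 hx
  · intro hx
    rw [← h] at hx
    exact Submodule.mem_comap.1 hx

lemma mem_ker_sup_iff (W : Submodule ℂ A.adjoint.domain) (x : A.adjoint.domain) :
    x ∈ LinearMap.ker A.adjoint.toFun ⊔ W ↔ A.adjoint x ∈ W.map A.adjoint.toFun := by
  constructor
  · intro hx
    obtain ⟨k, hk, w, hw, hsum⟩ := Submodule.mem_sup.1 hx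
    refine ⟨w, hw, ?_⟩
    have h1 : A.adjoint x = A.adjoint k + A.adjoint w := by
      rw [← hsum, A.adjoint.map_add]
    have hk0 : A.adjoint k = 0 := hk
    change A.adjoint w = A.adjoint x
    rw [h1, hk0, zero_add]
  · rintro ⟨w, hw, hww⟩
    have hker : x - w ∈ LinearMap.ker A.adjoint.toFun := by
      rw [LinearMap.mem_ker]
      change A.adjoint (x - w) = 0
      rw [A.adjoint.map_sub]
      rw [show A.adjoint.toFun w = A.adjoint w from rfl] at hww
      rw [hww, sub_self]
    have hx : x = (x - w) + w := by abel
    rw [hx]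
    exact Submodule.add_mem_sup hker hw

lemma adom_subset (hdense : Dense (A.domain : Set H))
    (hsym : ∀ x y : A.domain, ⟪A x, (y : H)⟫ = ⟪(x : H), A y⟫)
    (D : Submodule ℂ A.adjoint.domain) (hD : minDom A ≤ D) :
    (A.domain : Set H) ⊆ ((adjRestrict A D).domain : Set H) := by
  intro a ha
  have h1 : a ∈ A.adjoint.domain := (le_adjoint A hdense hsym).1 ha
  have h2 : (⟨a, h1⟩ : A.adjoint.domain) ∈ minDom A := ha
  exact ⟨⟨⟨a, h1⟩, hD h2, rfl⟩, h1⟩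

lemma le_adjRestrict (hdense : Dense (A.domain : Set H))
    (hsym : ∀ x y : A.domain, ⟪A x, (y : H)⟫ = ⟪(x : H), A y⟫)
    (D : Submodule ℂ A.adjoint.domain) (hD : minDom A ≤ D) :
    A ≤ adjRestrict A D := by
  have hAle := le_adjoint A hdense hsym
  refine ⟨adom_subset A hdense hsym D hD, ?_⟩
  rintro x y hxy
  have hx' : (x : H) ∈ A.adjoint.domain := hAle.1 x.2
  have h1 : A x = A.adjoint ⟨(x : H), hx'⟩ := hAle.2 rfl
  have h2 : adjRestrict A D y = A.adjoint ⟨(x : H), hx'⟩ :=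
    LinearPMap.domRestrict_apply (by rw [← hxy])
  rw [h1, h2]

lemma GD_isClosed (hdense : Dense (A.domain : Set H))
    (hsym : ∀ x y : A.domain, ⟪A x, (y : H)⟫ = ⟪(x : H), A y⟫)
    (D : Submodule ℂ A.adjoint.domain) (hD : minDom A ≤ D)
    (hsa : IsSelfAdjoint (adjRestrict A D)) :
    IsClosed ((adjRestrict A D).graph : Set (H × H)) := by
  have hdense' : Dense ((adjRestrict A D).domain : Set H) :=
    Dense.mono (adom_subset A hdense hsym D hD) hdense
  have h := CFP.adjoint_graph_isClosed hdense'
  rwa [LinearPMap.isSelfAdjoint_def.1 hsa] at h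

lemma snd_image_GD (D : Submodule ℂ A.adjoint.domain) :
    Prod.snd '' ((adjRestrict A D).graph : Set (H × H)) =
      (LinearMap.range (restrictMap A D) : Set H) := by
  ext y
  constructor
  · rintro ⟨p, hp, rfl⟩
    obtain ⟨u, hu1, hu2⟩ := (LinearPMap.mem_graph_iff _).1 hp
    obtain ⟨⟨d, hd, hdu⟩, hu3⟩ := Submodule.mem_inf.1 u.2
    have h2 : adjRestrict A D u = A.adjoint d :=
      LinearPMap.domRestrict_apply (by rw [← hdu]; rfl)
    refine ⟨⟨d, hd⟩, ?_⟩
    change A.adjoint d = p.2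
    rw [← hu2, h2]
  · rintro ⟨⟨d, hd⟩, rfl⟩
    have hdom : (d : H) ∈ (adjRestrict A D).domain := ⟨⟨d, hd, rfl⟩, d.2⟩
    refine ⟨((d : H), A.adjoint d), ?_, rfl⟩
    exact (LinearPMap.mem_graph_iff _).2
      ⟨⟨(d : H), hdom⟩, rfl, LinearPMap.domRestrict_apply rfl⟩

lemma snd_image_graphA (hdense : Dense (A.domain : Set H))
    (hsym : ∀ x y : A.domain, ⟪A x, (y : H)⟫ = ⟪(x : H), A y⟫) :
    Prod.snd '' (A.graph : Set (H × H)) =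
      ((minDom A).map A.adjoint.toFun : Set H) := by
  have hAle := le_adjoint A hdense hsym
  ext y
  constructor
  · rintro ⟨p, hp, rfl⟩
    obtain ⟨u, hu1, hu2⟩ := (LinearPMap.mem_graph_iff _).1 hp
    have hx' : (u : H) ∈ A.adjoint.domain := hAle.1 u.2
    have hmd : (⟨(u : H), hx'⟩ : A.adjoint.domain) ∈ minDom A := u.2
    refine ⟨⟨(u : H), hx'⟩, hmd, ?_⟩
    change A.adjoint ⟨(u : H), hx'⟩ = p.2
    rw [← hu2]
    exact (hAle.2 rfl).symm
  · rintro ⟨m, hm, rfl⟩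
    have hmem : (m : H) ∈ A.domain := hm
    refine ⟨((m : H), A.adjoint.toFun m), ?_, rfl⟩
    refine (LinearPMap.mem_graph_iff _).2 ⟨⟨(m : H), hmem⟩, rfl, ?_⟩
    change A ⟨(m : H), hmem⟩ = A.adjoint m
    exact hAle.2 rfl

end CFP

lemma CFP.kernel_fd (A : H →ₗ.[ℂ] H) (D : Submodule ℂ A.adjoint.domain)
    (hker : FiniteDimensional ℂ (LinearMap.ker (restrictMap A D))) :
    FiniteDimensional ℂ
      (((adjRestrict A D).graph ⊓ LinearMap.ker (ContinuousLinearMap.snd ℂ H H : H × H →ₗ[ℂ] H) :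
        Submodule ℂ (H × H)) : Type _) := by
  haveI := hker
  set η : ↥(LinearMap.ker (restrictMap A D)) →ₗ[ℂ] H × H :=
    LinearMap.prod
      (A.adjoint.domain.subtype.comp
        ((D.subtype).comp (LinearMap.ker (restrictMap A D)).subtype))
      0 with hη
  have hle : (adjRestrict A D).graph ⊓ LinearMap.ker (ContinuousLinearMap.snd ℂ H H : H × H →ₗ[ℂ] H)
      ≤ LinearMap.range η := by
    rintro p ⟨hp1, hp2⟩
    have hp2' : p.2 = 0 := hp2
    obtain ⟨u, hu1, hu2⟩ := (LinearPMap.mem_graph_iff _).1 hp1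
    obtain ⟨⟨d, hd, hdu⟩, hu3⟩ := Submodule.mem_inf.1 u.2
    have h2 : adjRestrict A D u = A.adjoint d :=
      LinearPMap.domRestrict_apply (by rw [← hdu]; rfl)
    have h3 : restrictMap A D ⟨d, hd⟩ = 0 := by
      change A.adjoint d = 0
      rw [← h2, hu2, hp2']
    refine ⟨⟨⟨d, hd⟩, LinearMap.mem_ker.2 h3⟩, ?_⟩
    have h4 : η ⟨⟨d, hd⟩, LinearMap.mem_ker.2 h3⟩ = ((d : H), 0) := rfl
    rw [h4]
    exact Prod.ext (by rw [← hu1, ← hdu]; rfl) hp2'.symm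
  exact Submodule.finiteDimensional_of_le hle

/-- If `dom A ⊆ D ⊆ dom A†` and `A_D := A†|_D` is a self-adjoint Fredholm
operator (finite-dimensional kernel, closed range of finite codimension), then
`CD(A) = γ(ker A†)` and `γ(D)` form a Fredholm pair of subspaces of `β(A)`: both are closed
(in the quotient norm), their intersection is finite-dimensional, and their sum is closed
and of finite codimension in `β(A)`. -/
theorem cauchyData_fredholm_pair
    [TopologicalSpace.SeparableSpace H]
    (A : H →ₗ.[ℂ] H)
    (hdense : Dense (A.domain : Set H))
    (hclosed : IsClosed (A.graph : Set (H × H)))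
    (hsym : ∀ x y : A.domain, ⟪A x, (y : H)⟫ = ⟪(x : H), A y⟫)
    (D : Submodule ℂ A.adjoint.domain)
    (hD : minDom A ≤ D)
    (hsa : IsSelfAdjoint (adjRestrict A D))
    (hker : FiniteDimensional ℂ (LinearMap.ker (restrictMap A D)))
    (hran : IsClosed ((LinearMap.range (restrictMap A D) : Submodule ℂ H) : Set H))
    (hcoker : FiniteDimensional ℂ (H ⧸ LinearMap.range (restrictMap A D))) :
    (∀ v : beta A,
        (∀ ε > (0 : ℝ), ∃ w ∈ cauchyData A, quotNorm A (v - w) < ε) → v ∈ cauchyData A) ∧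
    (∀ v : beta A,
        (∀ ε > (0 : ℝ), ∃ w ∈ D.map (gammaMap A), quotNorm A (v - w) < ε) →
          v ∈ D.map (gammaMap A)) ∧
    FiniteDimensional ℂ (cauchyData A ⊓ D.map (gammaMap A) : Submodule ℂ (beta A)) ∧
    (∀ v : beta A,
        (∀ ε > (0 : ℝ), ∃ w ∈ cauchyData A ⊔ D.map (gammaMap A), quotNorm A (v - w) < ε) →
          v ∈ cauchyData A ⊔ D.map (gammaMap A)) ∧
    FiniteDimensional ℂ (beta A ⧸ (cauchyData A ⊔ D.map (gammaMap A))) := by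
  have hAle := CFP.le_adjoint A hdense hsym
  have hGDc := CFP.GD_isClosed A hdense hsym D hD hsa
  have hMGD : A.graph ≤ (adjRestrict A D).graph :=
    LinearPMap.le_graph_of_le (CFP.le_adjRestrict A hdense hsym D hD)
  have hKfd := CFP.kernel_fd A D hker
  have hsndcoe : ⇑(ContinuousLinearMap.snd ℂ H H) = (Prod.snd : H × H → H) := rfl
  have hRclosed : IsClosed
      (⇑(ContinuousLinearMap.snd ℂ H H) '' ((adjRestrict A D).graph : Set (H × H))) := by
    rw [hsndcoe, CFP.snd_image_GD]
    exact hran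
  have hR0closed : IsClosed (((minDom A).map A.adjoint.toFun : Set H)) := by
    rw [← CFP.snd_image_graphA A hdense hsym, ← hsndcoe]
    exact CFP.isClosed_image_of_controlled (ContinuousLinearMap.snd ℂ H H)
      (adjRestrict A D).graph A.graph hMGD hGDc hclosed hKfd hRclosed
  have hrange_eq : LinearMap.range (restrictMap A D) = D.map A.adjoint.toFun := by
    rw [restrictMap, LinearMap.range_comp, Submodule.range_subtype]
  refine ⟨?_, ?_, ?_, ?_, ?_⟩
  · -- (1) CD(A) is closed
    intro v hv
    refine CFP.mem_of_quotNorm_approx A (cauchyData A)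
      (Prod.snd ⁻¹' (((minDom A).map A.adjoint.toFun : Set H)))
      (hR0closed.preimage continuous_snd) ?_ v hv
    intro z
    show A.adjoint z ∈ (minDom A).map A.adjoint.toFun ↔ _
    rw [← CFP.mem_ker_sup_iff A (minDom A) z]
    exact (CFP.mk_mem_map_iff A (LinearMap.ker A.adjoint.toFun) z).symm
  · -- (2) γ(D) is closed
    intro v hv
    refine CFP.mem_of_quotNorm_approx A (D.map (gammaMap A))
      ((adjRestrict A D).graph : Set (H × H)) hGDc ?_ v hv
    intro z
    constructor
    · intro h
      obtain ⟨u, hu1, hu2⟩ := (LinearPMap.mem_graph_iff _).1 h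
      obtain ⟨⟨d, hd, hdu⟩, hu3⟩ := Submodule.mem_inf.1 u.2
      have hdz : d = z := by
        have hh : (d : H) = (z : H) := by
          rw [show (d : H) = (u : H) from hdu, hu1]
        exact Subtype.coe_injective hh
      exact ⟨z, hdz ▸ hd, rfl⟩
    · intro h
      have hz : z ∈ D := by
        have := (CFP.mk_mem_map_iff A D z).1 h
        rwa [sup_eq_left.2 hD] at this
      exact (LinearPMap.mem_graph_iff _).2
        ⟨⟨(z : H), ⟨⟨z, hz, rfl⟩, z.2⟩⟩, rfl, LinearPMap.domRestrict_apply rfl⟩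
  · -- (3) finite-dimensional intersection
    haveI := hker
    set J : ↥(LinearMap.ker (restrictMap A D)) →ₗ[ℂ] beta A :=
      (gammaMap A).comp ((D.subtype).comp (LinearMap.ker (restrictMap A D)).subtype) with hJ
    have hle : cauchyData A ⊓ D.map (gammaMap A) ≤ LinearMap.range J := by
      rintro v ⟨hv1, hv2⟩
      obtain ⟨k, hk, hkv⟩ := hv1
      obtain ⟨d, hd, hdv⟩ := hv2
      have hkd : k - d ∈ minDom A := by
        rw [← Submodule.ker_mkQ (minDom A), LinearMap.mem_ker, map_sub]
        show gammaMap A k - gammaMap A d = 0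
        rw [hkv, hdv, sub_self]
      have hkD : k ∈ D := by
        have : k = (k - d) + d := by abel
        rw [this]
        exact D.add_mem (hD hkd) hd
      have hres : restrictMap A D ⟨k, hkD⟩ = 0 := by
        change A.adjoint.toFun k = 0
        exact hk
      exact ⟨⟨⟨k, hkD⟩, LinearMap.mem_ker.2 hres⟩, hkv⟩
    exact Submodule.finiteDimensional_of_le hle
  · -- (4) sum is closed
    intro v hv
    refine CFP.mem_of_quotNorm_approx A (cauchyData A ⊔ D.map (gammaMap A))
      (Prod.snd ⁻¹' ((LinearMap.range (restrictMap A D) : Submodule ℂ H) : Set H))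
      (hran.preimage continuous_snd) ?_ v hv
    intro z
    show A.adjoint z ∈ LinearMap.range (restrictMap A D) ↔ _
    rw [hrange_eq, ← CFP.mem_ker_sup_iff A D z]
    have hmapsup : cauchyData A ⊔ D.map (gammaMap A) =
        (LinearMap.ker A.adjoint.toFun ⊔ D).map (gammaMap A) :=
      (Submodule.map_sup _ _ _).symm
    rw [hmapsup, CFP.mk_mem_map_iff A _ z, sup_assoc, sup_eq_left.2 hD]
  · -- (5) finite codimension
    haveI := hcoker
    set Fq : A.adjoint.domain →ₗ[ℂ] H ⧸ LinearMap.range (restrictMap A D) :=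
      (LinearMap.range (restrictMap A D)).mkQ.comp A.adjoint.toFun with hFq
    have hkerFq : LinearMap.ker Fq = LinearMap.ker A.adjoint.toFun ⊔ D := by
      ext x
      rw [LinearMap.mem_ker]
      show (Submodule.Quotient.mk (A.adjoint.toFun x) :
        H ⧸ LinearMap.range (restrictMap A D)) = 0 ↔ _
      rw [Submodule.Quotient.mk_eq_zero, hrange_eq]
      exact (CFP.mem_ker_sup_iff A D x).symm
    have h5 : minDom A ≤ LinearMap.ker Fq := by
      rw [hkerFq]
      exact le_trans hD le_sup_right
    set F1 : beta A →ₗ[ℂ] H ⧸ LinearMap.range (restrictMap A D) :=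
      (minDom A).liftQ Fq h5 with hF1
    have hkerF1 : LinearMap.ker F1 = cauchyData A ⊔ D.map (gammaMap A) := by
      rw [hF1, Submodule.ker_liftQ, hkerFq]
      exact (Submodule.map_sup _ _ _)
    have e1 : (beta A ⧸ (cauchyData A ⊔ D.map (gammaMap A))) ≃ₗ[ℂ]
        (beta A ⧸ LinearMap.ker F1) :=
      Submodule.quotEquivOfEq _ _ hkerF1.symm
    have e2 := F1.quotKerEquivRange
    haveI : FiniteDimensional ℂ (LinearMap.range F1) := inferInstance
    exact (e1.trans e2).symm.finiteDimensional
end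
end

section
/- Let A be a densely defined closed symmetric operator on a complex separable Hilbert space H satisfying weak inner unique continuation, ker(A*) ∩ dom(A) = {0}, and let D be a subspace with dom(A) ⊆ D ⊆ dom(A*) such that A_D := A*|_D is self-adjoint. Then the quotient map γ restricts to a linear isomorphism from ker(A_D) = ker(A*) ∩ D onto CD(A) ∩ γ(D); in particular dim(CD(A) ∩ γ(D)) = dim ker(A_D). -/
open scoped ComplexInnerProductSpace

noncomputable section

variable {H : Type*} [NormedAddCommGroup H] [InnerProductSpace ℂ H] [CompleteSpace H]

/-- If `A` satisfies weak inner unique continuation, `ker A† ∩ dom A = {0}`,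
and `A_D := A†|_D` is self-adjoint for some `dom A ⊆ D ⊆ dom A†`, then `γ` restricts to a
linear isomorphism from `ker A_D = ker A† ∩ D` onto `CD(A) ∩ γ(D)`; in particular the two
spaces have the same dimension. -/
theorem gamma_iso_kernel_of_weak_inner_UCP
    [TopologicalSpace.SeparableSpace H]
    (A : H →ₗ.[ℂ] H)
    (hdense : Dense (A.domain : Set H))
    (hclosed : IsClosed (A.graph : Set (H × H)))
    (hsym : ∀ x y : A.domain, ⟪A x, (y : H)⟫ = ⟪(x : H), A y⟫)
    (hUCP : ∀ x : A.adjoint.domain, A.adjoint x = 0 → (x : H) ∈ A.domain → x = 0)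
    (D : Submodule ℂ A.adjoint.domain)
    (hD : minDom A ≤ D)
    (hsa : IsSelfAdjoint (adjRestrict A D)) :
    (∃ e : (LinearMap.ker A.adjoint.toFun ⊓ D : Submodule ℂ A.adjoint.domain) ≃ₗ[ℂ]
        (cauchyData A ⊓ D.map (gammaMap A) : Submodule ℂ (beta A)),
      ∀ x : (LinearMap.ker A.adjoint.toFun ⊓ D : Submodule ℂ A.adjoint.domain),
        (e x : beta A) = gammaMap A (x : A.adjoint.domain)) ∧
    Module.rank ℂ (LinearMap.ker A.adjoint.toFun ⊓ D : Submodule ℂ A.adjoint.domain)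
      = Module.rank ℂ (cauchyData A ⊓ D.map (gammaMap A) : Submodule ℂ (beta A)) := by
  set K := (LinearMap.ker A.adjoint.toFun ⊓ D : Submodule ℂ A.adjoint.domain) with hK
  set T := (cauchyData A ⊓ D.map (gammaMap A) : Submodule ℂ (beta A)) with hT
  have hmem : ∀ x : A.adjoint.domain, x ∈ K → gammaMap A x ∈ T := by
    intro x hx
    exact ⟨⟨x, hx.1, rfl⟩, ⟨x, hx.2, rfl⟩⟩
  let f : K →ₗ[ℂ] T :=
    ((gammaMap A).comp K.subtype).codRestrict T (fun x => hmem x x.2)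
  have hinj : Function.Injective f := by
    rw [← LinearMap.ker_eq_bot, LinearMap.ker_eq_bot']
    intro m hm
    have h0 : gammaMap A (m : A.adjoint.domain) = 0 := congrArg Subtype.val hm
    have hmin : (m : A.adjoint.domain) ∈ minDom A := by
      rwa [gammaMap, Submodule.mkQ_apply, Submodule.Quotient.mk_eq_zero] at h0
    have hker : A.adjoint (m : A.adjoint.domain) = 0 := m.2.1
    exact Subtype.ext (hUCP _ hker hmin)
  have hsurj : Function.Surjective f := by
    rintro ⟨v, ⟨x, hx, hxv⟩, ⟨d, hd, hdv⟩⟩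
    have hxd : x - d ∈ minDom A := by
      have h0 : gammaMap A (x - d) = 0 := by
        rw [map_sub, hxv, hdv, sub_self]
      rwa [gammaMap, Submodule.mkQ_apply, Submodule.Quotient.mk_eq_zero] at h0
    have hxD : x ∈ D := by
      have h1 := D.add_mem (hD hxd) hd
      simpa using h1
    exact ⟨⟨x, hx, hxD⟩, Subtype.ext hxv⟩
  let e := LinearEquiv.ofBijective f ⟨hinj, hsurj⟩
  exact ⟨⟨e, fun x => rfl⟩, e.rank_eq⟩
end
end
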